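/- For every positive integer n and nonnegative integers k and m, the sum over i from 0 to n of (-1)^i * C(n,i) * C(2n-2i+m, n+k) equals 2^(n-k) times the sum over i from 0 to m of 2^i * C(m,i) * C(n, k-i). -/

import Mathlib

open Polynomial Finset

lemma aux_key (n : ℕ) (A : ℚ[X]) :
    (A - 1) ^ n = ∑ i ∈ range (n + 1), C ((-1 : ℚ) ^ i * (n.choose i)) * A ^ (n - i) := by
  rw [sub_pow, ← Finset.sum_range_reflect]
  apply Finset.sum_congr rfl
  intro i hi
  rw [Finset.mem_range] at hi
  have h1 : n + 1 - 1 - i = n - i := by omega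
  rw [h1]
  have h2 : n - (n - i) = i := by omega
  rw [Nat.choose_symm (by omega : i ≤ n)]
  rw [show n - i + n = i + 2 * (n - i) by omega]
  simp [pow_add, pow_mul, map_mul, map_pow]
  ring

lemma aux_poly (n m : ℕ) :
    ∑ i ∈ range (n + 1),
        C ((-1 : ℚ) ^ i * (n.choose i)) * (1 + X) ^ (2 * (n - i) + m)
      = X ^ n * ((X + C 2) ^ n * (1 + X) ^ m) := by
  have key := aux_key n ((1 + X : ℚ[X]) ^ 2)
  have hfac : ((1 + X : ℚ[X]) ^ 2 - 1) = X * (X + C 2) := by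
    have : (C 2 : ℚ[X]) = 2 := map_ofNat C 2
    rw [this]; ring
  calc ∑ i ∈ range (n + 1),
        C ((-1 : ℚ) ^ i * (n.choose i)) * (1 + X) ^ (2 * (n - i) + m)
      = (∑ i ∈ range (n + 1),
          C ((-1 : ℚ) ^ i * (n.choose i)) * ((1 + X) ^ 2) ^ (n - i)) * (1 + X) ^ m := by
        rw [Finset.sum_mul]
        apply Finset.sum_congr rfl
        intro i _
        rw [pow_add, pow_mul, mul_assoc]
    _ = ((1 + X : ℚ[X]) ^ 2 - 1) ^ n * (1 + X) ^ m := by rw [key]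
    _ = X ^ n * ((X + C 2) ^ n * (1 + X) ^ m) := by rw [hfac, mul_pow]; ring

lemma aux_sum (n k m : ℕ) :
    ∑ i ∈ range (k + 1), (2:ℚ) ^ (n - i) * (n.choose i) * (m.choose (k - i))
      = (2:ℚ) ^ ((n:ℤ) - (k:ℤ)) *
          ∑ j ∈ range (m + 1),
            (2:ℚ) ^ j * (m.choose j) * (if j ≤ k then ((n.choose (k - j) : ℚ)) else 0) := by
  set G : ℕ → ℚ := fun j => if j ≤ k then (2:ℚ) ^ (n - (k - j)) * (n.choose (k - j)) * (m.choose j) else 0 with hG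
  have h1 : ∑ i ∈ range (k + 1), (2:ℚ) ^ (n - i) * (n.choose i) * (m.choose (k - i))
      = ∑ j ∈ range (k + 1), G j := by
    rw [← Finset.sum_range_reflect]
    apply Finset.sum_congr rfl
    intro j hj
    rw [Finset.mem_range] at hj
    rw [hG]
    simp only [if_pos (by omega : j ≤ k)]
    rw [show k + 1 - 1 - j = k - j by omega, show k - (k - j) = j by omega]
  have h2 : ∑ j ∈ range (k + 1), G j = ∑ j ∈ range (m + k + 1), G j := by
    apply Finset.sum_subset (Finset.range_subset_range.2 (by omega : k + 1 ≤ m + k + 1))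
    intro j _ hj
    rw [Finset.mem_range] at hj
    rw [hG]
    simp only [if_neg (by omega : ¬ j ≤ k)]
  have h3 : (2:ℚ) ^ ((n:ℤ) - (k:ℤ)) *
          ∑ j ∈ range (m + 1),
            (2:ℚ) ^ j * (m.choose j) * (if j ≤ k then ((n.choose (k - j) : ℚ)) else 0)
      = ∑ j ∈ range (m + k + 1), G j := by
    rw [Finset.mul_sum]
    rw [Finset.sum_subset (Finset.range_subset_range.2 (by omega : m + 1 ≤ m + k + 1))]
    · apply Finset.sum_congr rfl
      intro j _
      rw [hG]
      by_cases hjk : j ≤ k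
      · simp only [if_pos hjk]
        by_cases hkn : k - j ≤ n
        · have h2 : ((n:ℤ) - (k:ℤ)) + (j:ℤ) = ((n - (k - j) : ℕ) : ℤ) := by omega
          rw [show (2:ℚ) ^ ((n:ℤ) - (k:ℤ)) * ((2:ℚ) ^ j * (m.choose j) * (n.choose (k-j)))
              = ((2:ℚ) ^ ((n:ℤ) - (k:ℤ)) * (2:ℚ) ^ (j:ℤ)) * (m.choose j) * (n.choose (k-j)) by
            rw [zpow_natCast]; ring]
          rw [← zpow_add₀ (two_ne_zero), h2, zpow_natCast]
          ring
        · rw [Nat.choose_eq_zero_of_lt (by omega : n < k - j)]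
          push_cast
          ring
      · simp only [if_neg hjk]
        ring
    · intro j hj1 hj2
      rw [Finset.mem_range] at hj1 hj2
      rw [Nat.choose_eq_zero_of_lt (by omega : m < j)]
      push_cast
      ring
  rw [h1, h2, h3]

theorem stmt0 (n k m : ℕ) (hn : 0 < n) :
    ∑ i ∈ Finset.range (n + 1),
        ((-1 : ℚ) ^ i * (n.choose i) * ((2 * n - 2 * i + m).choose (n + k))) =
      (2 : ℚ) ^ ((n : ℤ) - (k : ℤ)) *
        ∑ i ∈ Finset.range (m + 1),
          (2 : ℚ) ^ i * (m.choose i) *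
            (if i ≤ k then ((n.choose (k - i) : ℚ)) else 0) := by
  have hc := congrArg (fun p : ℚ[X] => p.coeff (n + k)) (aux_poly n m)
  beta_reduce at hc
  rw [finset_sum_coeff] at hc
  simp only [coeff_C_mul, coeff_one_add_X_pow] at hc
  rw [show n + k = k + n from add_comm n k, coeff_X_pow_mul, coeff_mul,
    Finset.Nat.sum_antidiagonal_eq_sum_range_succ_mk] at hc
  simp only [coeff_X_add_C_pow, coeff_one_add_X_pow] at hc
  calc ∑ i ∈ Finset.range (n + 1),
        ((-1 : ℚ) ^ i * (n.choose i) * ((2 * n - 2 * i + m).choose (n + k)))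
      = ∑ i ∈ Finset.range (n + 1),
        ((-1 : ℚ) ^ i * (n.choose i) * ((2 * (n - i) + m).choose (k + n))) := by
        apply Finset.sum_congr rfl
        intro i hi
        rw [Finset.mem_range] at hi
        rw [show 2 * n - 2 * i + m = 2 * (n - i) + m by omega, add_comm n k]
    _ = ∑ i ∈ range (k + 1), (2:ℚ) ^ (n - i) * (n.choose i) * (m.choose (k - i)) := by
        rw [hc]
    _ = _ := aux_sum n k m
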